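/- Rounding lemma (deterministic form): Let A ∈ ℝ^{n×n} be symmetric with ∑_{i=1}^n |A_{ii}| ≤ 20√n and operator norm ‖A‖_op ≤ 3. Then for every ε₀ ∈ [0, 1] and every x ∈ ℝⁿ with d(x, [−1,1]ⁿ)² ≤ n·ε₀, there exists σ ∈ {−1, +1}ⁿ such that ⟨σ, Aσ⟩/(2n) ≥ ⟨x, Ax⟩/(2n) − 20·(√ε₀ + 1/√n). -/

import Mathlib

open Matrix

/-- The ℓ² operator norm of a real `n × n` matrix. -/
noncomputable def l2OpNorm {n : ℕ} (A : Matrix (Fin n) (Fin n) ℝ) : ℝ :=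
  ‖(Matrix.toEuclideanCLM (𝕜 := ℝ) A : EuclideanSpace ℝ (Fin n) →L[ℝ] EuclideanSpace ℝ (Fin n))‖

/-- The squared Euclidean distance `d(x, [−1,1]ⁿ)²` from a point `x ∈ ℝⁿ` to the solid
hypercube `[−1,1]ⁿ`. -/
noncomputable def distSqToCube {n : ℕ} (x : Fin n → ℝ) : ℝ :=
  sInf {d : ℝ | ∃ y : Fin n → ℝ, (∀ i, |y i| ≤ 1) ∧ d = ∑ i, (x i - y i) ^ 2}

noncomputable section
namespace RLD
variable {n : ℕ}

/-- The quadratic form with the diagonal part removed; affine in each coordinate. -/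
def g (A : Matrix (Fin n) (Fin n) ℝ) (y : Fin n → ℝ) : ℝ :=
  y ⬝ᵥ A.mulVec y - ∑ j, A j j * y j ^ 2

lemma update_eq (y : Fin n → ℝ) (i : Fin n) (t : ℝ) :
    Function.update y i t = y + (t - y i) • (Pi.single i 1 : Fin n → ℝ) := by
  funext j
  by_cases h : j = i
  · subst h; simp
  · simp [Function.update_of_ne h, Pi.single_apply, h]

lemma quad_update (A : Matrix (Fin n) (Fin n) ℝ) (hsymm : A.IsSymm)
    (y : Fin n → ℝ) (i : Fin n) (t : ℝ) :
    (Function.update y i t) ⬝ᵥ A.mulVec (Function.update y i t)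
      = y ⬝ᵥ A.mulVec y + (t - y i) * (2 * A.mulVec y i) + (t - y i)^2 * A i i := by
  have hAy : y ⬝ᵥ A.mulVec (Pi.single i 1) = A.mulVec y i := by
    rw [Matrix.mulVec_single]
    simp only [dotProduct, Matrix.mulVec, mul_one, MulOpposite.op_one, one_smul, Matrix.col_apply]
    refine Finset.sum_congr rfl fun j _ => ?_
    rw [hsymm.apply]
    ring
  have he : (Pi.single i 1 : Fin n → ℝ) ⬝ᵥ A.mulVec (Pi.single i 1) = A i i := by
    rw [Matrix.mulVec_single, single_dotProduct]
    simp
  rw [update_eq, Matrix.mulVec_add, Matrix.mulVec_smul, dotProduct_add, add_dotProduct,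
    add_dotProduct, dotProduct_smul, smul_dotProduct, smul_dotProduct,
    dotProduct_smul, single_dotProduct, hAy, he]
  simp only [smul_eq_mul, one_mul]
  ring

lemma g_update (A : Matrix (Fin n) (Fin n) ℝ) (hsymm : A.IsSymm)
    (y : Fin n → ℝ) (i : Fin n) (t : ℝ) :
    g A (Function.update y i t) = g A y + (t - y i) * (2 * (A.mulVec y i - A i i * y i)) := by
  have hdiag : ∑ j, A j j * (Function.update y i t j) ^ 2
      = (∑ j, A j j * y j ^ 2) + A i i * (t ^ 2 - y i ^ 2) := by
    have h1 : ∑ j, A j j * (Function.update y i t j) ^ 2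
        = A i i * (Function.update y i t i) ^ 2
          + ∑ j ∈ Finset.univ.erase i, A j j * (Function.update y i t j) ^ 2 :=
      (Finset.add_sum_erase _ (fun j => A j j * (Function.update y i t j) ^ 2)
        (Finset.mem_univ i)).symm
    have h2 : ∑ j, A j j * y j ^ 2
        = A i i * y i ^ 2 + ∑ j ∈ Finset.univ.erase i, A j j * y j ^ 2 :=
      (Finset.add_sum_erase _ (fun j => A j j * y j ^ 2) (Finset.mem_univ i)).symm
    have h3 : ∑ j ∈ Finset.univ.erase i, A j j * (Function.update y i t j) ^ 2
        = ∑ j ∈ Finset.univ.erase i, A j j * y j ^ 2 := by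
      refine Finset.sum_congr rfl fun j hj => ?_
      rw [Function.update_of_ne (Finset.ne_of_mem_erase hj)]
    rw [h1, h2, h3, Function.update_self]
    ring
  unfold g
  rw [quad_update A hsymm, hdiag]
  ring

lemma exists_sign_step (A : Matrix (Fin n) (Fin n) ℝ) (hsymm : A.IsSymm)
    (y : Fin n → ℝ) (hy : ∀ j, |y j| ≤ 1) (i : Fin n) :
    ∃ c : ℝ, (c = 1 ∨ c = -1) ∧ g A y ≤ g A (Function.update y i c) := by
  have h := abs_le.mp (hy i)
  rcases le_total 0 (2 * (A.mulVec y i - A i i * y i)) with hb | hb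
  · exact ⟨1, Or.inl rfl, by rw [g_update A hsymm]; nlinarith⟩
  · exact ⟨-1, Or.inr rfl, by rw [g_update A hsymm]; nlinarith⟩

lemma exists_sign (A : Matrix (Fin n) (Fin n) ℝ) (hsymm : A.IsSymm)
    (s : Finset (Fin n)) : ∀ y : Fin n → ℝ, (∀ j, |y j| ≤ 1) →
    ∃ z : Fin n → ℝ, (∀ j, |z j| ≤ 1) ∧ (∀ j ∈ s, z j = 1 ∨ z j = -1) ∧ g A y ≤ g A z := by
  induction s using Finset.induction_on with
  | empty => intro y hy; exact ⟨y, hy, by simp, le_refl _⟩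
  | @insert a s ha ih =>
    intro y hy
    obtain ⟨z, hz1, hz2, hz3⟩ := ih y hy
    obtain ⟨c, hc, hgc⟩ := exists_sign_step A hsymm z hz1 a
    have hc1 : |c| ≤ 1 := by rcases hc with h | h <;> simp [h]
    refine ⟨Function.update z a c, ?_, ?_, hz3.trans hgc⟩
    · intro j
      by_cases hj : j = a
      · subst hj; rw [Function.update_self]; exact hc1
      · rw [Function.update_of_ne hj]; exact hz1 j
    · intro j hj
      rcases Finset.mem_insert.mp hj with rfl | hj2
      · simpa using hc
      · rw [Function.update_of_ne (by rintro rfl; exact ha hj2)]; exact hz2 j hj2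

lemma norm_equiv (u : Fin n → ℝ) :
    ‖((WithLp.equiv 2 (Fin n → ℝ)).symm u : EuclideanSpace ℝ (Fin n))‖
      = Real.sqrt (∑ i, u i ^ 2) := by
  rw [EuclideanSpace.norm_eq]
  congr 1
  refine Finset.sum_congr rfl fun i _ => ?_
  simp [WithLp.equiv_symm_apply, Real.norm_eq_abs, sq_abs]

lemma bilin_bound (A : Matrix (Fin n) (Fin n) ℝ) (u v : Fin n → ℝ) :
    |u ⬝ᵥ A.mulVec v|
      ≤ l2OpNorm A * (Real.sqrt (∑ i, u i ^ 2) * Real.sqrt (∑ i, v i ^ 2)) := by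
  set U : EuclideanSpace ℝ (Fin n) := (WithLp.equiv 2 (Fin n → ℝ)).symm u with hU
  set V : EuclideanSpace ℝ (Fin n) := (WithLp.equiv 2 (Fin n → ℝ)).symm v with hV
  have h1 : u ⬝ᵥ A.mulVec v = inner (𝕜 := ℝ) U ((Matrix.toEuclideanCLM (𝕜 := ℝ) A) V) := by
    rw [hV, WithLp.equiv_symm_apply, Matrix.toEuclideanCLM_toLp]
    simp [PiLp.inner_apply, RCLike.inner_apply, dotProduct, hU,
      WithLp.equiv_symm_apply, mul_comm]
  calc |u ⬝ᵥ A.mulVec v| ≤ ‖U‖ * ‖(Matrix.toEuclideanCLM (𝕜 := ℝ) A) V‖ := by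
        rw [h1]; exact abs_real_inner_le_norm _ _
    _ ≤ ‖U‖ * (l2OpNorm A * ‖V‖) := by
        gcongr
        exact (Matrix.toEuclideanCLM (𝕜 := ℝ) A).le_opNorm V
    _ = l2OpNorm A * (‖U‖ * ‖V‖) := by ring
    _ = _ := by rw [hU, hV, norm_equiv, norm_equiv]

end RLD
end

set_option maxHeartbeats 1000000 in
/-- **Rounding lemma (deterministic form).** If `A` is symmetric with
`∑ᵢ |Aᵢᵢ| ≤ 20 √n` and `‖A‖_op ≤ 3`, then for every `ε₀ ∈ [0,1]` and every `x ∈ ℝⁿ` with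
`d(x, [−1,1]ⁿ)² ≤ n ε₀` there exists `σ ∈ {−1,+1}ⁿ` with
`⟨σ, Aσ⟩/(2n) ≥ ⟨x, Ax⟩/(2n) − 20 (√ε₀ + 1/√n)`. -/
theorem rounding_lemma_deterministic (n : ℕ) (A : Matrix (Fin n) (Fin n) ℝ)
    (hsymm : A.IsSymm)
    (hdiag : ∑ i, |A i i| ≤ 20 * Real.sqrt n)
    (hop : l2OpNorm A ≤ 3)
    (ε₀ : ℝ) (hε₀ : 0 ≤ ε₀) (hε₀' : ε₀ ≤ 1)
    (x : Fin n → ℝ) (hx : distSqToCube x ≤ n * ε₀) :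
    ∃ σ : Fin n → ℝ, (∀ i, σ i = 1 ∨ σ i = -1) ∧
      x ⬝ᵥ A.mulVec x / (2 * n) - 20 * (Real.sqrt ε₀ + 1 / Real.sqrt n)
        ≤ σ ⬝ᵥ A.mulVec σ / (2 * n) := by
  rcases Nat.eq_zero_or_pos n with rfl | hn
  · refine ⟨fun _ => 1, fun i => Or.inl rfl, ?_⟩
    simp only [dotProduct, Finset.univ_eq_empty, Finset.sum_empty, Nat.cast_zero, mul_zero,
      div_zero, Real.sqrt_zero, div_zero, add_zero]
    nlinarith [Real.sqrt_nonneg ε₀]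
  have hn0 : (0:ℝ) < n := Nat.cast_pos.mpr hn
  have hsn : (0:ℝ) < Real.sqrt n := Real.sqrt_pos.mpr hn0
  have hsnsq : Real.sqrt n * Real.sqrt n = (n:ℝ) := Real.mul_self_sqrt hn0.le
  have hsd0 : 0 ≤ Real.sqrt ε₀ := Real.sqrt_nonneg _
  have hsd1 : Real.sqrt ε₀ ≤ 1 := Real.sqrt_le_one.mpr hε₀'
  -- the clamped point
  set y : Fin n → ℝ := fun i => min 1 (max (-1) (x i)) with hy_def
  have hy : ∀ i, |y i| ≤ 1 := fun i =>
    abs_le.mpr ⟨le_min (by norm_num) (le_max_left _ _), min_le_left _ _⟩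
  have hdist : ∑ i, (x i - y i) ^ 2 ≤ (n:ℝ) * ε₀ := by
    refine le_trans ?_ hx
    refine le_csInf ⟨_, y, hy, rfl⟩ ?_
    rintro d ⟨z, hz, rfl⟩
    refine Finset.sum_le_sum fun i _ => ?_
    have h1 := (abs_le.mp (hz i)).1
    have h2 := (abs_le.mp (hz i)).2
    show (x i - min 1 (max (-1) (x i))) ^ 2 ≤ (x i - z i) ^ 2
    rcases le_total (x i) 1 with h | h
    · rcases le_total (-1 : ℝ) (x i) with h' | h'
      · rw [max_eq_right h', min_eq_right h]
        simpa using sq_nonneg (x i - z i)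
      · rw [max_eq_left h', min_eq_right (by norm_num : (-1:ℝ) ≤ 1)]
        nlinarith
    · rw [max_eq_right (by linarith : (-1:ℝ) ≤ x i), min_eq_left h]
      nlinarith
  -- norms
  set Nd := Real.sqrt (∑ i, (x i - y i) ^ 2) with hNd_def
  set Ny := Real.sqrt (∑ i, y i ^ 2) with hNy_def
  set Nx := Real.sqrt (∑ i, x i ^ 2) with hNx_def
  have hNd0 : 0 ≤ Nd := Real.sqrt_nonneg _
  have hNy0 : 0 ≤ Ny := Real.sqrt_nonneg _
  have hNx0 : 0 ≤ Nx := Real.sqrt_nonneg _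
  have hNd : Nd ≤ Real.sqrt n * Real.sqrt ε₀ := by
    rw [hNd_def, ← Real.sqrt_mul (by positivity)]
    exact Real.sqrt_le_sqrt hdist
  have hNy : Ny ≤ Real.sqrt n := by
    refine Real.sqrt_le_sqrt ?_
    calc ∑ i, y i ^ 2 ≤ ∑ _i : Fin n, (1:ℝ) := by
          refine Finset.sum_le_sum fun i _ => ?_
          have := abs_le.mp (hy i); nlinarith
      _ = (n:ℝ) := by simp
  have hNx : Nx ≤ 2 * Real.sqrt n := by
    have hxsplit : ((WithLp.equiv 2 (Fin n → ℝ)).symm x : EuclideanSpace ℝ (Fin n))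
        = (WithLp.equiv 2 (Fin n → ℝ)).symm y
          + (WithLp.equiv 2 (Fin n → ℝ)).symm (fun i => x i - y i) := by
      ext i
      simp [WithLp.equiv_symm_apply]
    have htri := norm_add_le ((WithLp.equiv 2 (Fin n → ℝ)).symm y : EuclideanSpace ℝ (Fin n))
      ((WithLp.equiv 2 (Fin n → ℝ)).symm (fun i => x i - y i))
    rw [← hxsplit, RLD.norm_equiv, RLD.norm_equiv, RLD.norm_equiv] at htri
    have : Nx ≤ Ny + Nd := htri
    nlinarith
  -- quadratic form comparison via operator norm
  have hopn : 0 ≤ l2OpNorm A := norm_nonneg _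
  have hq : x ⬝ᵥ A.mulVec x - y ⬝ᵥ A.mulVec y ≤ 9 * (n:ℝ) * Real.sqrt ε₀ := by
    have hsplit : x ⬝ᵥ A.mulVec x - y ⬝ᵥ A.mulVec y
        = (fun i => x i - y i) ⬝ᵥ A.mulVec x + y ⬝ᵥ A.mulVec (fun i => x i - y i) := by
      have h1 : (fun i => x i - y i) = x - y := rfl
      rw [h1, sub_dotProduct, Matrix.mulVec_sub, dotProduct_sub]
      ring
    have b1 := RLD.bilin_bound A (fun i => x i - y i) x
    have b2 := RLD.bilin_bound A y (fun i => x i - y i)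
    rw [← hNd_def, ← hNx_def] at b1
    rw [← hNd_def, ← hNy_def] at b2
    have e1 : l2OpNorm A * (Nd * Nx) ≤ 6 * (n:ℝ) * Real.sqrt ε₀ := by
      have h1 : Nd * Nx ≤ (Real.sqrt n * Real.sqrt ε₀) * (2 * Real.sqrt n) :=
        mul_le_mul hNd hNx hNx0 (by positivity)
      have h2 : (Real.sqrt n * Real.sqrt ε₀) * (2 * Real.sqrt n) = 2 * (n:ℝ) * Real.sqrt ε₀ := by
        calc (Real.sqrt n * Real.sqrt ε₀) * (2 * Real.sqrt n)
            = 2 * (Real.sqrt n * Real.sqrt n) * Real.sqrt ε₀ := by ring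
          _ = 2 * (n:ℝ) * Real.sqrt ε₀ := by rw [hsnsq]
      have h30 : l2OpNorm A * (Nd * Nx) ≤ 3 * (Nd * Nx) :=
        mul_le_mul_of_nonneg_right hop (mul_nonneg hNd0 hNx0)
      rw [h2] at h1
      linarith
    have e2 : l2OpNorm A * (Ny * Nd) ≤ 3 * (n:ℝ) * Real.sqrt ε₀ := by
      have h1 : Ny * Nd ≤ Real.sqrt n * (Real.sqrt n * Real.sqrt ε₀) :=
        mul_le_mul hNy hNd hNd0 (by positivity)
      have h2 : Real.sqrt n * (Real.sqrt n * Real.sqrt ε₀) = (n:ℝ) * Real.sqrt ε₀ := by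
        calc Real.sqrt n * (Real.sqrt n * Real.sqrt ε₀)
            = (Real.sqrt n * Real.sqrt n) * Real.sqrt ε₀ := by ring
          _ = (n:ℝ) * Real.sqrt ε₀ := by rw [hsnsq]
      have h30 : l2OpNorm A * (Ny * Nd) ≤ 3 * (Ny * Nd) :=
        mul_le_mul_of_nonneg_right hop (mul_nonneg hNy0 hNd0)
      rw [h2] at h1
      linarith
    have a1 := (abs_le.mp b1).2
    have a2 := (abs_le.mp b2).2
    rw [hsplit]
    linarith
  -- rounding y to signs
  obtain ⟨σ, hσ1, hσ2, hσ3⟩ := RLD.exists_sign A hsymm Finset.univ y hy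
  have hσsign : ∀ j, σ j = 1 ∨ σ j = -1 := fun j => hσ2 j (Finset.mem_univ j)
  have hσsq : ∀ j, σ j ^ 2 = 1 := by
    intro j; rcases hσsign j with h | h <;> rw [h] <;> norm_num
  refine ⟨σ, hσsign, ?_⟩
  have hgσ : σ ⬝ᵥ A.mulVec σ = RLD.g A σ + ∑ j, A j j := by
    unfold RLD.g
    have : ∑ j, A j j * σ j ^ 2 = ∑ j, A j j := by
      refine Finset.sum_congr rfl fun j _ => by rw [hσsq j, mul_one]
    rw [this]; ring
  have hb1 : |∑ j, A j j * y j ^ 2| ≤ ∑ j, |A j j| := by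
    refine (Finset.abs_sum_le_sum_abs _ _).trans ?_
    refine Finset.sum_le_sum fun j _ => ?_
    rw [abs_mul, abs_pow]
    have h1 : |y j| ^ 2 ≤ 1 := by
      have := hy j
      nlinarith [abs_nonneg (y j)]
    calc |A j j| * |y j| ^ 2 ≤ |A j j| * 1 :=
          mul_le_mul_of_nonneg_left h1 (abs_nonneg _)
      _ = |A j j| := mul_one _
  have hb2 : |∑ j, A j j| ≤ ∑ j, |A j j| := Finset.abs_sum_le_sum_abs _ _
  have hσlow : y ⬝ᵥ A.mulVec y - 40 * Real.sqrt n ≤ σ ⬝ᵥ A.mulVec σ := by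
    have hgy : RLD.g A y = y ⬝ᵥ A.mulVec y - ∑ j, A j j * y j ^ 2 := rfl
    have := (abs_le.mp hb1).2
    have := (abs_le.mp hb2).1
    rw [hgσ]
    have h1 := (abs_le.mp hb1).2
    have h2 := (abs_le.mp hb2).1
    have h3 : RLD.g A y ≤ RLD.g A σ := hσ3
    rw [hgy] at h3
    linarith
  -- final arithmetic
  have hfin : x ⬝ᵥ A.mulVec x - σ ⬝ᵥ A.mulVec σ
      ≤ 40 * (n:ℝ) * Real.sqrt ε₀ + 40 * Real.sqrt n := by
    have hnsd : 0 ≤ (n:ℝ) * Real.sqrt ε₀ := mul_nonneg hn0.le hsd0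
    linarith
  have h2n : (0:ℝ) < 2 * n := by positivity
  have hrew : (n:ℝ) * (1 / Real.sqrt n) = Real.sqrt n := by
    rw [mul_one_div, eq_comm, eq_div_iff hsn.ne', hsnsq]
  have hkey : (x ⬝ᵥ A.mulVec x - σ ⬝ᵥ A.mulVec σ) / (2 * n)
      ≤ 20 * (Real.sqrt ε₀ + 1 / Real.sqrt n) := by
    rw [div_le_iff₀ h2n]
    have hr : 20 * (Real.sqrt ε₀ + 1 / Real.sqrt n) * (2 * (n:ℝ))
        = 40 * (n:ℝ) * Real.sqrt ε₀ + 40 * ((n:ℝ) * (1 / Real.sqrt n)) := by ring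
    rw [hr, hrew]
    exact hfin
  have heq : (x ⬝ᵥ A.mulVec x - σ ⬝ᵥ A.mulVec σ) / (2 * n)
      = x ⬝ᵥ A.mulVec x / (2 * n) - σ ⬝ᵥ A.mulVec σ / (2 * n) := sub_div _ _ _
  linarith [hkey, heq.symm.le, heq.le]
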